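/- arXiv:1104.0067 — 4 statements merged into one kernel-verified Lean document; each statement's English description precedes it below -/
import Mathlib

section
/- Let K be a field of characteristic not 2, V a K-vector space of dimension 4, and Q a quadratic form on V. Then for every element x of the Clifford algebra of Q there exist s, d : K such that, setting adj := reverse x * (algebraMap s - x * reverse x), one has x * adj = algebraMap d and adj * x = algebraMap d. (This is the paper's four-dimensional adjugate Adj(A) = ⟦A⟧₂₃⟦A⟦A⟧₂₃⟧₁₄, which multiplies A on either side to the determinant d; in particular if d ≠ 0 then A is invertible with inverse Adj(A)/d.) -/
open CliffordAlgebra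

namespace AdjAux

def insdel (i : Fin 4) : List (Fin 4) → List (Fin 4)
  | [] => [i]
  | j :: t => if i < j then i :: j :: t else if i = j then t else j :: insdel i t

def nf : List (Fin 4) → List (Fin 4)
  | [] => []
  | i :: t => insdel i (nf t)

def srt (S : Finset (Fin 4)) : List (Fin 4) := (List.finRange 4).filter (· ∈ S)

lemma nf_append_srt : ∀ S T : Finset (Fin 4), nf (srt S ++ srt T) = srt (symmDiff S T) := by
  decide

lemma srt_nodup : ∀ S, (srt S).Nodup := by decide

lemma length_srt : ∀ S : Finset (Fin 4), (srt S).length = S.card := by decide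

lemma srt_empty : srt (∅ : Finset (Fin 4)) = [] := by decide

lemma srt_singleton : ∀ i : Fin 4, srt {i} = [i] := by decide

lemma filter_srt_univ : ∀ i : Fin 4, (((srt Finset.univ).filter (· ≠ i))).length = 3 := by decide

section alg

variable {K V : Type*} [Field K] [AddCommGroup V] [Module K V]
variable (Q : QuadraticForm K V) (b : Fin 4 → V)

/-- product of generators indexed by a list -/
def eL (l : List (Fin 4)) : CliffordAlgebra Q := (l.map fun i => ι Q (b i)).prod

lemma eL_nil : eL Q b [] = 1 := rfl

lemma eL_cons (i : Fin 4) (l : List (Fin 4)) :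
    eL Q b (i :: l) = ι Q (b i) * eL Q b l := by
  simp [eL]

lemma eL_singleton (i : Fin 4) : eL Q b [i] = ι Q (b i) := by simp [eL]

lemma eL_append (l₁ l₂ : List (Fin 4)) :
    eL Q b (l₁ ++ l₂) = eL Q b l₁ * eL Q b l₂ := by
  simp [eL]

variable {Q b}
variable (hanti : ∀ i j : Fin 4, i ≠ j →
  ι Q (b i) * ι Q (b j) = - (ι Q (b j) * ι Q (b i)))

include hanti in
lemma move (i : Fin 4) (l : List (Fin 4)) :
    ι Q (b i) * eL Q b l
      = ((-1 : K) ^ ((l.filter (· ≠ i)).length)) • (eL Q b l * ι Q (b i)) := by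
  induction l with
  | nil => simp [eL_nil]
  | cons j t IH =>
    by_cases h : j = i
    · subst h
      have hf : ((j :: t).filter (· ≠ j)) = t.filter (· ≠ j) := by simp
      rw [hf, eL_cons]
      conv_rhs => rw [mul_assoc, ← mul_smul_comm, ← IH]
    · have h' : j ≠ i := h
      have hf : ((j :: t).filter (· ≠ i)) = j :: t.filter (· ≠ i) := by simp [h']
      rw [hf, eL_cons, ← mul_assoc, hanti i j (Ne.symm h'), neg_mul, mul_assoc, IH,
        mul_smul_comm, ← neg_smul, List.length_cons, pow_succ, mul_assoc]
      congr 1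
      ring

include hanti in
lemma ins_norm (i : Fin 4) (l : List (Fin 4)) :
    ∃ ν : K, ι Q (b i) * eL Q b l = ν • eL Q b (insdel i l) := by
  induction l with
  | nil => exact ⟨1, by simp [insdel, eL_singleton, eL_nil]⟩
  | cons j t IH =>
    rcases lt_trichotomy i j with h | h | h
    · exact ⟨1, by rw [insdel, if_pos h, eL_cons, eL_cons, eL_cons, one_smul]⟩
    · subst h
      refine ⟨Q (b i), ?_⟩
      rw [insdel, if_neg (lt_irrefl i), if_pos rfl, eL_cons, ← mul_assoc,
        ι_sq_scalar, Algebra.smul_def]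
    · obtain ⟨ν, hν⟩ := IH
      refine ⟨-ν, ?_⟩
      rw [insdel, if_neg (not_lt_of_gt h), if_neg (ne_of_gt h)]
      rw [eL_cons, ← mul_assoc, hanti i j (ne_of_gt h), neg_mul, mul_assoc, hν,
        mul_smul_comm, eL_cons, neg_smul, ← neg_smul]

include hanti in
lemma nf_norm (l : List (Fin 4)) : ∃ μ : K, eL Q b l = μ • eL Q b (nf l) := by
  induction l with
  | nil => exact ⟨1, by simp [nf]⟩
  | cons i t IH =>
    obtain ⟨μ, hμ⟩ := IH
    obtain ⟨ν, hν⟩ := ins_norm hanti i (nf t)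
    refine ⟨μ * ν, ?_⟩
    rw [eL_cons, hμ, mul_smul_comm, hν, smul_smul, nf]

variable (Q b) in
/-- blade indexed by a subset -/
def eS (S : Finset (Fin 4)) : CliffordAlgebra Q := eL Q b (srt S)

lemma eS_empty : eS Q b ∅ = 1 := by rw [eS, srt_empty, eL_nil]

lemma eS_singleton (i : Fin 4) : eS Q b {i} = ι Q (b i) := by
  rw [eS, srt_singleton, eL_singleton]

include hanti in
lemma blade_mul (S T : Finset (Fin 4)) :
    ∃ μ : K, eS Q b S * eS Q b T = μ • eS Q b (symmDiff S T) := by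
  obtain ⟨μ, h⟩ := nf_norm hanti (srt S ++ srt T)
  refine ⟨μ, ?_⟩
  rw [eS, eS, ← eL_append, h, nf_append_srt, eS]

include hanti in
lemma mul_mem_span_blades {x y : CliffordAlgebra Q}
    (hx : x ∈ Submodule.span K (Set.range (eS Q b)))
    (hy : y ∈ Submodule.span K (Set.range (eS Q b))) :
    x * y ∈ Submodule.span K (Set.range (eS Q b)) := by
  have main : ∀ S : Finset (Fin 4), ∀ y ∈ Submodule.span K (Set.range (eS Q b)),
      eS Q b S * y ∈ Submodule.span K (Set.range (eS Q b)) := by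
    intro S y hy
    induction hy using Submodule.span_induction with
    | mem z hz =>
      obtain ⟨T, rfl⟩ := hz
      obtain ⟨μ, h⟩ := blade_mul hanti S T
      rw [h]
      exact Submodule.smul_mem _ _ (Submodule.subset_span ⟨_, rfl⟩)
    | zero => simp
    | add a c _ _ ha hc => rw [mul_add]; exact add_mem ha hc
    | smul r a _ ha => rw [mul_smul_comm]; exact Submodule.smul_mem _ _ ha
  induction hx using Submodule.span_induction with
  | mem z hz => obtain ⟨S, rfl⟩ := hz; exact main S y hy
  | zero => simp
  | add a c _ _ ha hc => rw [add_mul]; exact add_mem ha hc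
  | smul r a _ ha => rw [smul_mul_assoc]; exact Submodule.smul_mem _ _ ha

include hanti in
lemma mem_span_blades (hb : Submodule.span K (Set.range b) = ⊤)
    (x : CliffordAlgebra Q) :
    x ∈ Submodule.span K (Set.range (eS Q b)) := by
  induction x using CliffordAlgebra.induction with
  | algebraMap r =>
    rw [Algebra.algebraMap_eq_smul_one]
    exact Submodule.smul_mem _ _ (Submodule.subset_span ⟨∅, eS_empty⟩)
  | ι v =>
    have hv : v ∈ Submodule.span K (Set.range b) := hb ▸ Submodule.mem_top
    have hle : Submodule.span K (Set.range b) ≤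
        Submodule.comap (ι Q) (Submodule.span K (Set.range (eS Q b))) := by
      rw [Submodule.span_le]
      rintro _ ⟨i, rfl⟩
      exact Submodule.subset_span ⟨{i}, eS_singleton i⟩
    exact hle hv
  | mul a c ha hc => exact mul_mem_span_blades hanti ha hc
  | add a c ha hc => exact add_mem ha hc

variable (Q b) in
lemma reverse_eL (l : List (Fin 4)) : reverse (eL Q b l) = eL Q b l.reverse := by
  induction l with
  | nil => simp [eL_nil]
  | cons i t IH =>
    rw [eL_cons, reverse.map_mul, IH, reverse_ι, List.reverse_cons, eL_append, eL_singleton]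

include hanti in
lemma revSign (l : List (Fin 4)) (h : l.Nodup) :
    eL Q b l.reverse = ((-1 : K) ^ (l.length.choose 2)) • eL Q b l := by
  induction l with
  | nil => simp
  | cons i t IH =>
    obtain ⟨hi, ht⟩ := List.nodup_cons.mp h
    have hf : (t.filter (· ≠ i)) = t := by
      rw [List.filter_eq_self]
      intro a ha
      simp only [ne_eq, decide_eq_true_eq]
      exact fun e => hi (e ▸ ha)
    have hm := move hanti i t
    rw [hf] at hm
    have hm' : eL Q b t * ι Q (b i) = ((-1 : K) ^ t.length) • (ι Q (b i) * eL Q b t) := by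
      rw [hm, smul_smul, ← pow_add, ← two_mul, pow_mul, neg_one_sq, one_pow, one_smul]
    rw [List.reverse_cons, eL_append, eL_singleton, IH ht, smul_mul_assoc, hm',
      smul_smul, ← pow_add, ← eL_cons]
    congr 2
    rw [List.length_cons, Nat.choose_succ_succ, Nat.choose_one_right, Nat.add_comm]

include hanti in
lemma reverse_eS (S : Finset (Fin 4)) :
    reverse (eS Q b S) = ((-1 : K) ^ (S.card.choose 2)) • eS Q b S := by
  rw [eS, reverse_eL, revSign hanti _ (srt_nodup S), length_srt]

end alg

end AdjAux

open AdjAux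

/-- In dimension 4 (char K ≠ 2), the paper's adjugate
`Adj(A) = ⟦A⟧₂₃ ⟦A ⟦A⟧₂₃⟧₁₄ = reverse x * (algebraMap s - x * reverse x)`
multiplies `x` on either side to the scalar determinant `d`. -/
theorem adj_dim_four (K V : Type*) [Field K] [AddCommGroup V] [Module K V]
    [FiniteDimensional K V] (h2 : (2 : K) ≠ 0)
    (hdim : Module.finrank K V = 4)
    (Q : QuadraticForm K V) (x : CliffordAlgebra Q) :
    ∃ s d : K,
      x * (reverse x * (algebraMap K (CliffordAlgebra Q) s - x * reverse x)) =
          algebraMap K (CliffordAlgebra Q) d ∧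
        (reverse x * (algebraMap K (CliffordAlgebra Q) s - x * reverse x)) * x =
          algebraMap K (CliffordAlgebra Q) d := by
  rcases eq_or_ne x 0 with rfl | hx
  · exact ⟨0, 0, by simp, by simp⟩
  have h2i : Invertible (2 : K) := invertibleOfNonzero h2
  obtain ⟨v, hv⟩ := LinearMap.BilinForm.exists_orthogonal_basis
    (QuadraticForm.associated_isSymm (S := K) Q)
  set b : Module.Basis (Fin 4) K V := v.reindex (finCongr hdim) with hb
  -- orthogonality of the basis
  have horth : ∀ i j : Fin 4, i ≠ j → Q.IsOrtho (b i) (b j) := by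
    intro i j hij
    have h0 : (QuadraticMap.associated (R := K) Q).IsOrtho (b i) (b j) := by
      simp only [hb, Module.Basis.reindex_apply]
      exact hv (fun e => hij (by simpa using congrArg (finCongr hdim) e))
    exact QuadraticMap.associated_isOrtho.mp h0
  have hanti : ∀ i j : Fin 4, i ≠ j →
      ι Q (b i) * ι Q (b j) = - (ι Q (b j) * ι Q (b i)) :=
    fun i j hij => ι_mul_ι_comm_of_isOrtho (horth i j hij)
  have hbspan : Submodule.span K (Set.range (⇑b : Fin 4 → V)) = ⊤ := b.span_eq
  -- the projection onto grades fixed by reverse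
  set P : CliffordAlgebra Q →ₗ[K] CliffordAlgebra Q :=
    (2 : K)⁻¹ • (LinearMap.id + reverse) with hP
  have hPapp : ∀ y : CliffordAlgebra Q, P y = (2 : K)⁻¹ • (y + reverse y) := by
    intro y; simp [hP]
  have hPfix : ∀ y : CliffordAlgebra Q, reverse y = y → P y = y := by
    intro y hy
    rw [hPapp, hy, ← two_smul K y, smul_smul, inv_mul_cancel₀ h2, one_smul]
  have hPval : ∀ S : Finset (Fin 4),
      P (eS Q ⇑b S) = 0 ∨
        (P (eS Q ⇑b S) = eS Q ⇑b S ∧ (S = ∅ ∨ S.card = 1 ∨ S.card = 4)) := by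
    intro S
    have hrev := reverse_eS hanti S
    have hc4 : S.card ≤ 4 := le_trans (Finset.card_le_univ S) (by simp)
    have hfix : (-1 : K) ^ (S.card.choose 2) = 1 →
        P (eS Q ⇑b S) = eS Q ⇑b S := by
      intro h1
      rw [hPapp, hrev, h1, one_smul, ← two_smul K, smul_smul, inv_mul_cancel₀ h2, one_smul]
    have hkill : (-1 : K) ^ (S.card.choose 2) = -1 →
        P (eS Q ⇑b S) = 0 := by
      intro h1
      rw [hPapp, hrev, h1, neg_smul, one_smul, add_neg_cancel, smul_zero]
    set n := S.card with hn
    interval_cases n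
    · exact Or.inr ⟨hfix (by rw [show Nat.choose 0 2 = 0 from rfl]; norm_num),
        Or.inl (Finset.card_eq_zero.mp hn.symm)⟩
    · exact Or.inr ⟨hfix (by rw [show Nat.choose 1 2 = 0 from rfl]; norm_num),
        Or.inr (Or.inl rfl)⟩
    · exact Or.inl (hkill (by rw [show Nat.choose 2 2 = 1 from rfl]; norm_num))
    · exact Or.inl (hkill (by rw [show Nat.choose 3 2 = 3 from rfl]; norm_num))
    · exact Or.inr ⟨hfix (by rw [show Nat.choose 4 2 = 6 from rfl]; norm_num),
        Or.inr (Or.inr rfl)⟩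
  -- the span of grade-{1,4} blades
  set Wset : Set (CliffordAlgebra Q) :=
    eS Q ⇑b '' {S : Finset (Fin 4) | S.card = 1 ∨ S.card = 4} with hWset
  set Wsub : Submodule K (CliffordAlgebra Q) := Submodule.span K Wset with hWsub
  have hPspan : ∀ (s : Set (CliffordAlgebra Q)) (y : CliffordAlgebra Q),
      y ∈ Submodule.span K s → P y ∈ Submodule.span K (P '' s) := by
    intro s y hy
    rw [← Submodule.map_span]
    exact Submodule.mem_map_of_mem hy
  have hspan := mem_span_blades hanti hbspan
  -- every reverse-fixed element is a scalar plus an element of Wsub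
  have hdecomp : ∀ y : CliffordAlgebra Q, reverse y = y →
      ∃ (a : K) (g : CliffordAlgebra Q), g ∈ Wsub ∧
        y = algebraMap K (CliffordAlgebra Q) a + g := by
    intro y hy
    have h1 : P y ∈ Submodule.span K (P '' Set.range (eS Q ⇑b)) :=
      hPspan _ y (hspan y)
    have h2' : Submodule.span K (P '' Set.range (eS Q ⇑b)) ≤
        Submodule.span K (insert 1 Wset) := by
      rw [Submodule.span_le]
      rintro _ ⟨_, ⟨S, rfl⟩, rfl⟩
      rcases hPval S with h | ⟨h, hS⟩
      · rw [h]; exact Submodule.zero_mem _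
      · rw [h]
        rcases hS with rfl | hS
        · exact Submodule.subset_span (by rw [eS_empty]; exact Set.mem_insert _ _)
        · exact Submodule.subset_span (Set.mem_insert_of_mem _ ⟨S, hS, rfl⟩)
    rw [hPfix y hy] at h1
    obtain ⟨a, z, hz, hrep⟩ := Submodule.mem_span_insert.mp (h2' h1)
    refine ⟨a, z, hz, ?_⟩
    rw [hrep, Algebra.algebraMap_eq_smul_one]
  -- commutators lie in the span of nonempty blades
  have hcommutator : ∀ y z : CliffordAlgebra Q,
      y * z - z * y ∈ Submodule.span K (eS Q ⇑b '' {S : Finset (Fin 4) | S ≠ ∅}) := by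
    intro y z
    have main : ∀ S : Finset (Fin 4), ∀ z : CliffordAlgebra Q,
        eS Q ⇑b S * z - z * eS Q ⇑b S ∈
          Submodule.span K (eS Q ⇑b '' {S : Finset (Fin 4) | S ≠ ∅}) := by
      intro S z
      induction hspan z using Submodule.span_induction with
      | mem w hw =>
        obtain ⟨T, rfl⟩ := hw
        rcases eq_or_ne S T with rfl | hST
        · rw [sub_self]; exact Submodule.zero_mem _
        · obtain ⟨μ, hμ⟩ := blade_mul hanti S T
          obtain ⟨μ', hμ'⟩ := blade_mul hanti T S
          rw [hμ, hμ', symmDiff_comm T S, ← sub_smul]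
          refine Submodule.smul_mem _ _ (Submodule.subset_span ⟨symmDiff S T, ?_, rfl⟩)
          simp only [Set.mem_setOf_eq, ne_eq]
          rw [← Finset.bot_eq_empty, symmDiff_eq_bot]
          exact hST
      | zero => simp
      | add p q _ _ hp hq =>
        have : eS Q ⇑b S * (p + q) - (p + q) * eS Q ⇑b S =
            (eS Q ⇑b S * p - p * eS Q ⇑b S) + (eS Q ⇑b S * q - q * eS Q ⇑b S) := by
          noncomm_ring
        rw [this]; exact add_mem hp hq
      | smul r p _ hp =>
        have : eS Q ⇑b S * (r • p) - (r • p) * eS Q ⇑b S =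
            r • (eS Q ⇑b S * p - p * eS Q ⇑b S) := by
          rw [mul_smul_comm, smul_mul_assoc, smul_sub]
        rw [this]; exact Submodule.smul_mem _ _ hp
    induction hspan y using Submodule.span_induction with
    | mem w hw => obtain ⟨S, rfl⟩ := hw; exact main S z
    | zero => simp
    | add p q _ _ hp hq =>
      have : (p + q) * z - z * (p + q) = (p * z - z * p) + (q * z - z * q) := by noncomm_ring
      rw [this]; exact add_mem hp hq
    | smul r p _ hp =>
      have : (r • p) * z - z * (r • p) = r • (p * z - z * p) := by
        rw [mul_smul_comm, smul_mul_assoc, smul_sub]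
      rw [this]; exact Submodule.smul_mem _ _ hp
  -- reverse-fixed commutators lie in Wsub
  have hcommW : ∀ y z : CliffordAlgebra Q, reverse (y * z - z * y) = y * z - z * y →
      y * z - z * y ∈ Wsub := by
    intro y z hrev
    have h1 := hPspan _ _ (hcommutator y z)
    rw [hPfix _ hrev] at h1
    refine Submodule.span_le.mpr ?_ h1
    rintro _ ⟨_, ⟨S, hS, rfl⟩, rfl⟩
    rcases hPval S with h | ⟨h, hcase⟩
    · rw [h]; exact Submodule.zero_mem _
    · rw [h]
      rcases hcase with rfl | hS' 
      · exact absurd rfl hS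
      · exact Submodule.subset_span ⟨S, hS', rfl⟩
  -- squares of elements of Wsub are scalars
  set E : CliffordAlgebra Q := eS Q ⇑b Finset.univ with hE
  obtain ⟨ε, hε⟩ : ∃ ε : K, E * E = algebraMap K (CliffordAlgebra Q) ε := by
    obtain ⟨μ, hμ⟩ := blade_mul hanti (Finset.univ : Finset (Fin 4)) Finset.univ
    refine ⟨μ, ?_⟩
    rw [hE, hμ, symmDiff_self, Finset.bot_eq_empty, eS_empty, Algebra.algebraMap_eq_smul_one]
  have hιE : ∀ m : V, ι Q m * E + E * ι Q m = 0 := by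
    have hL : ((LinearMap.mulRight K E).comp (ι Q) + (LinearMap.mulLeft K E).comp (ι Q)) = 0 := by
      apply LinearMap.ext_on hbspan
      rintro _ ⟨i, rfl⟩
      have hm := move hanti i (srt Finset.univ)
      rw [filter_srt_univ i] at hm
      have : ι Q (b i) * eL Q ⇑b (srt Finset.univ) =
          -(eL Q ⇑b (srt Finset.univ) * ι Q (b i)) := by
        rw [hm]; norm_num
      simp only [LinearMap.add_apply, LinearMap.comp_apply, LinearMap.mulRight_apply,
        LinearMap.mulLeft_apply, LinearMap.zero_apply]
      rw [hE, eS, this, neg_add_cancel]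
    intro m
    have := DFunLike.congr_fun hL m
    simpa using this
  have hWsq : ∀ w : CliffordAlgebra Q, w ∈ Wsub →
      ∃ γ : K, w * w = algebraMap K (CliffordAlgebra Q) γ := by
    intro w hw
    have hWle : Wsub ≤ LinearMap.range (ι Q) ⊔ (K ∙ E) := by
      rw [hWsub, Submodule.span_le]
      rintro _ ⟨S, hS, rfl⟩
      rcases hS with hS | hS
      · obtain ⟨i, rfl⟩ := Finset.card_eq_one.mp hS
        rw [eS_singleton]
        exact Submodule.mem_sup_left (LinearMap.mem_range_self _ _)
      · have : S = Finset.univ := Finset.card_eq_iff_eq_univ S |>.mp (by simpa using hS)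
        rw [this]
        exact Submodule.mem_sup_right (Submodule.mem_span_singleton_self E)
    obtain ⟨y, hy, z, hz, rfl⟩ := Submodule.mem_sup.mp (hWle hw)
    obtain ⟨m, rfl⟩ := hy
    obtain ⟨c, rfl⟩ := Submodule.mem_span_singleton.mp hz
    refine ⟨Q m + c * c * ε, ?_⟩
    have expand : (ι Q m + c • E) * (ι Q m + c • E) =
        ι Q m * ι Q m + c • (ι Q m * E + E * ι Q m) + (c * c) • (E * E) := by
      simp only [mul_add, add_mul, smul_mul_assoc, mul_smul_comm, smul_smul, smul_add]
      abel
    rw [expand, hιE m, smul_zero, add_zero, ι_sq_scalar, hε]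
    rw [Algebra.smul_def, ← map_mul, ← map_add]
  -- decompose u = x * reverse x and η = reverse x * x
  set u : CliffordAlgebra Q := x * reverse x with hu
  set η : CliffordAlgebra Q := reverse x * x with hη
  have hurev : reverse u = u := by rw [hu, reverse.map_mul, reverse_reverse]
  obtain ⟨a, g, hg, hgu⟩ := hdecomp u hurev
  have hdiff : u - η ∈ Wsub := by
    have hrevd : reverse (x * reverse x - reverse x * x) = x * reverse x - reverse x * x := by
      rw [map_sub, reverse.map_mul, reverse_reverse, reverse.map_mul, reverse_reverse]
    exact hcommW x (reverse x) hrevd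
  set g' : CliffordAlgebra Q := g - (u - η) with hg'def
  have hg'W : g' ∈ Wsub := sub_mem hg hdiff
  have hgη : η = algebraMap K (CliffordAlgebra Q) a + g' := by
    rw [hg'def, hgu]; abel
  obtain ⟨γ, hγ⟩ := hWsq g hg
  obtain ⟨γ', hγ'⟩ := hWsq g' hg'W
  -- the key scalar computation
  have key : ∀ (g0 : CliffordAlgebra Q) (γ0 : K),
      g0 * g0 = algebraMap K (CliffordAlgebra Q) γ0 →
      (algebraMap K (CliffordAlgebra Q) a + g0) *
        (algebraMap K (CliffordAlgebra Q) (2 * a) -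
          (algebraMap K (CliffordAlgebra Q) a + g0)) =
      algebraMap K (CliffordAlgebra Q) (a * a - γ0) := by
    intro g0 γ0 h0
    have h2a : algebraMap K (CliffordAlgebra Q) (2 * a) - algebraMap K (CliffordAlgebra Q) a
        = algebraMap K (CliffordAlgebra Q) a := by
      rw [← map_sub]; ring_nf
    calc (algebraMap K (CliffordAlgebra Q) a + g0) *
          (algebraMap K (CliffordAlgebra Q) (2 * a) -
            (algebraMap K (CliffordAlgebra Q) a + g0))
        = (algebraMap K (CliffordAlgebra Q) a + g0) *
            (algebraMap K (CliffordAlgebra Q) a - g0) := by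
          rw [sub_add_eq_sub_sub, h2a]
      _ = algebraMap K (CliffordAlgebra Q) a * algebraMap K (CliffordAlgebra Q) a - g0 * g0
            + (g0 * algebraMap K (CliffordAlgebra Q) a
                - algebraMap K (CliffordAlgebra Q) a * g0) := by noncomm_ring
      _ = algebraMap K (CliffordAlgebra Q) (a * a - γ0) := by
          rw [← Algebra.commutes a g0, sub_self, add_zero, ← map_mul, h0, ← map_sub]
  have heq1 : x * (reverse x * (algebraMap K (CliffordAlgebra Q) (2 * a) - u)) =
      algebraMap K (CliffordAlgebra Q) (a * a - γ) := by
    rw [← mul_assoc, ← hu, hgu]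
    exact key g γ hγ
  have hval : (reverse x * (algebraMap K (CliffordAlgebra Q) (2 * a) - u)) * x
      = algebraMap K (CliffordAlgebra Q) (a * a - γ') := by
    have hstep : (reverse x * (algebraMap K (CliffordAlgebra Q) (2 * a) - u)) * x
        = algebraMap K (CliffordAlgebra Q) (2 * a) * η - η * η := by
      rw [mul_sub, sub_mul]
      congr 1
      · rw [← Algebra.commutes (2 * a) (reverse x), mul_assoc, hη]
      · rw [hu, ← mul_assoc (reverse x) x (reverse x), mul_assoc, hη]
    have hswap : algebraMap K (CliffordAlgebra Q) (2 * a) * η - η * η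
        = η * (algebraMap K (CliffordAlgebra Q) (2 * a) - η) := by
      rw [mul_sub, Algebra.commutes]
    rw [hstep, hswap, hgη]
    exact key g' γ' hγ'
  have hd : a * a - γ = a * a - γ' := by
    have h1 : x * ((reverse x * (algebraMap K (CliffordAlgebra Q) (2 * a) - u)) * x)
        = (a * a - γ') • x := by
      rw [hval, ← Algebra.commutes (a * a - γ') x, ← Algebra.smul_def]
    have h2' : x * ((reverse x * (algebraMap K (CliffordAlgebra Q) (2 * a) - u)) * x)
        = (a * a - γ) • x := by
      rw [← mul_assoc, heq1, ← Algebra.smul_def]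
    have h3 := h2'.symm.trans h1
    have h4 : (a * a - γ - (a * a - γ')) • x = 0 := by
      rw [sub_smul, h3, sub_self]
    rcases smul_eq_zero.mp h4 with h5 | h5
    · exact sub_eq_zero.mp h5
    · exact absurd h5 hx
  exact ⟨2 * a, a * a - γ, heq1, by rw [hval, hd]⟩
end

section
/- Let K be a field of characteristic not 2, V a K-vector space of dimension 4, and Q a quadratic form on V. Then for every element x of the Clifford algebra of Q there exist s, d : K such that (reverse x * x) * (algebraMap s - reverse x * x) = algebraMap d. (This is the paper's alternative, non-adjugatable four-dimensional determinant formula Det(A) = ⟦A⟧₂₃ · A · ⟦⟦A⟧₂₃ · A⟧₁₄, with the factor order reversed relative to the adjugatable formula; since ⟦A⟧₂₃·A has only grades {0,1,4}, the grade-negation ⟦·⟧₁₄ of it equals algebraMap s minus it, with s twice its grade-0 coefficient.) -/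
open CliffordAlgebra

section Aux

variable {K A : Type*} [Field K] [Ring A] [Algebra K A]

namespace DetDimFourAux

variable (g : Fin 4 → A)

/-- Product of generators indexed by a list. -/
def P (l : List (Fin 4)) : A := (l.map g).prod

lemma P_nil : P g [] = 1 := rfl

lemma P_cons (i : Fin 4) (l : List (Fin 4)) : P g (i :: l) = g i * P g l := by
  simp [P]

lemma P_append (l₁ l₂ : List (Fin 4)) : P g (l₁ ++ l₂) = P g l₁ * P g l₂ := by
  simp [P]

variable (hsw : ∀ i j : Fin 4, i ≠ j → g i * g j = -(g j * g i))
variable (hsq : ∀ i : Fin 4, ∃ c : K, g i * g i = algebraMap K A c)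

include hsw in
lemma pass_through : ∀ (t : List (Fin 4)) (i : Fin 4), (∀ j ∈ t, j ≠ i) → ∀ y : A,
    P g t * (g i * y) = ((-1 : K) ^ t.length) • (g i * (P g t * y))
  | [], i, _, y => by simp [P_nil]
  | j :: t, i, h, y => by
    have hji : j ≠ i := h j (List.mem_cons_self)
    have ht : ∀ k ∈ t, k ≠ i := fun k hk => h k (List.mem_cons_of_mem _ hk)
    have hswap : ∀ z : A, g j * (g i * z) = -(g i * (g j * z)) := by
      intro z
      rw [← mul_assoc, hsw j i hji, neg_mul, mul_assoc]
    calc P g (j :: t) * (g i * y) = g j * (P g t * (g i * y)) := by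
          rw [P_cons, mul_assoc]
      _ = g j * (((-1 : K) ^ t.length) • (g i * (P g t * y))) := by
          rw [pass_through t i ht y]
      _ = ((-1 : K) ^ t.length) • (g j * (g i * (P g t * y))) := by
          rw [mul_smul_comm]
      _ = ((-1 : K) ^ t.length) • (-(g i * (g j * (P g t * y)))) := by
          rw [hswap]
      _ = ((-1 : K) ^ (j :: t).length) • (g i * (P g (j :: t) * y)) := by
          simp [List.length_cons, pow_succ, mul_smul, P_cons, mul_assoc]

include hsw in
lemma pass_through' (t : List (Fin 4)) (i : Fin 4) (h : ∀ j ∈ t, j ≠ i) (y : A) :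
    g i * (P g t * y) = ((-1 : K) ^ t.length) • (P g t * (g i * y)) := by
  rw [pass_through (K := K) g hsw t i h y, smul_smul, ← pow_add, Even.neg_one_pow ⟨t.length, rfl⟩,
    one_smul]

include hsw hsq in
lemma insert_lemma : ∀ (l : List (Fin 4)), l.Pairwise (· < ·) → ∀ i : Fin 4,
    ∃ (c : K) (l' : List (Fin 4)), l'.Pairwise (· < ·) ∧ (∀ k ∈ l', k = i ∨ k ∈ l) ∧
      g i * P g l = c • P g l'
  | [], _, i => ⟨1, [i], List.pairwise_singleton _ _, by simp, by simp [P]⟩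
  | j :: t, hl, i => by
    rw [List.pairwise_cons] at hl
    obtain ⟨hjt, ht⟩ := hl
    rcases lt_trichotomy i j with hij | hij | hij
    · refine ⟨1, i :: j :: t, ?_, ?_, ?_⟩
      · rw [List.pairwise_cons]
        refine ⟨?_, List.pairwise_cons.2 ⟨hjt, ht⟩⟩
        intro k hk
        rcases List.mem_cons.1 hk with rfl | hk
        · exact hij
        · exact hij.trans (hjt k hk)
      · intro k hk
        rcases List.mem_cons.1 hk with rfl | hk
        · exact Or.inl rfl
        · exact Or.inr hk
      · simp [P_cons]
    · subst hij
      obtain ⟨c, hc⟩ := hsq i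
      refine ⟨c, t, ht, fun k hk => Or.inr (List.mem_cons_of_mem _ hk), ?_⟩
      rw [P_cons, ← mul_assoc, hc, ← Algebra.smul_def]
    · obtain ⟨c, l', hl', hmem, heq⟩ := insert_lemma t ht i
      refine ⟨-c, j :: l', ?_, ?_, ?_⟩
      · rw [List.pairwise_cons]
        refine ⟨?_, hl'⟩
        intro k hk
        rcases hmem k hk with rfl | hk
        · exact hij
        · exact hjt k hk
      · intro k hk
        rcases List.mem_cons.1 hk with rfl | hk
        · exact Or.inr (List.mem_cons_self)
        · rcases hmem k hk with rfl | hk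
          · exact Or.inl rfl
          · exact Or.inr (List.mem_cons_of_mem _ hk)
      · have hswap : ∀ z : A, g i * (g j * z) = -(g j * (g i * z)) := by
          intro z
          rw [← mul_assoc, hsw i j (ne_of_gt hij), neg_mul, mul_assoc]
        calc g i * P g (j :: t) = g i * (g j * P g t) := by rw [P_cons]
          _ = -(g j * (g i * P g t)) := hswap _
          _ = -(g j * (c • P g l')) := by rw [heq]
          _ = -(c • (g j * P g l')) := by rw [mul_smul_comm]
          _ = (-c) • P g (j :: l') := by rw [P_cons, neg_smul]

include hsw hsq in
lemma sq_scalar : ∀ (l : List (Fin 4)), l.Pairwise (· < ·) →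
    ∃ c : K, P g l * P g l = algebraMap K A c
  | [], _ => ⟨1, by simp [P]⟩
  | i :: t, hl => by
    rw [List.pairwise_cons] at hl
    obtain ⟨hit, ht⟩ := hl
    obtain ⟨c, hc⟩ := sq_scalar t ht
    obtain ⟨ci, hci⟩ := hsq i
    have hne : ∀ j ∈ t, j ≠ i := fun j hj => ne_of_gt (hit j hj)
    refine ⟨(-1 : K) ^ t.length * (ci * c), ?_⟩
    calc P g (i :: t) * P g (i :: t) = g i * (P g t * (g i * P g t)) := by
          rw [P_cons, mul_assoc]
      _ = g i * (((-1 : K) ^ t.length) • (g i * (P g t * P g t))) := by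
          rw [pass_through (K := K) g hsw t i hne]
      _ = ((-1 : K) ^ t.length) • (g i * (g i * (P g t * P g t))) := by
          rw [mul_smul_comm]
      _ = ((-1 : K) ^ t.length) • (algebraMap K A ci * algebraMap K A c) := by
          rw [← mul_assoc, hci, hc]
      _ = algebraMap K A ((-1 : K) ^ t.length * (ci * c)) := by
          rw [← map_mul, Algebra.smul_def, ← map_mul]

include hsw in
lemma rev_eq : ∀ (l : List (Fin 4)), l.Pairwise (· < ·) →
    P g l.reverse = ((-1 : K) ^ (l.length.choose 2)) • P g l
  | [], _ => by simp [P]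
  | i :: t, hl => by
    rw [List.pairwise_cons] at hl
    obtain ⟨hit, ht⟩ := hl
    have hne : ∀ j ∈ t, j ≠ i := fun j hj => ne_of_gt (hit j hj)
    have hPi : P g [i] = g i := by simp [P]
    calc P g (i :: t).reverse = P g t.reverse * g i := by
          rw [List.reverse_cons, P_append, hPi]
      _ = (((-1 : K) ^ (t.length.choose 2)) • P g t) * g i := by
          rw [rev_eq t ht]
      _ = ((-1 : K) ^ (t.length.choose 2)) • (P g t * (g i * 1)) := by
          rw [smul_mul_assoc, mul_one]
      _ = ((-1 : K) ^ (t.length.choose 2)) • (((-1 : K) ^ t.length) • (g i * (P g t * 1))) := by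
          rw [pass_through (K := K) g hsw t i hne]
      _ = ((-1 : K) ^ ((i :: t).length.choose 2)) • P g (i :: t) := by
          rw [smul_smul, ← pow_add, mul_one, ← P_cons, List.length_cons,
            Nat.choose_succ_succ, Nat.choose_one_right, Nat.add_comm]

include hsw hsq in
lemma anti_mid (l1 l2 : List (Fin 4)) (i : Fin 4) (h1 : ∀ j ∈ l1, j ≠ i)
    (h2 : ∀ j ∈ l2, j ≠ i) (hodd : ((-1 : K) ^ l1.length) = -((-1 : K) ^ l2.length)) :
    g i * P g (l1 ++ i :: l2) + P g (l1 ++ i :: l2) * g i = 0 := by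
  obtain ⟨c, hc⟩ := hsq i
  have hgig : ∀ z : A, g i * (g i * z) = c • z := by
    intro z
    rw [← mul_assoc, hc, ← Algebra.smul_def]
  have e1 : g i * P g (l1 ++ i :: l2) =
      ((-1 : K) ^ l1.length) • (c • P g (l1 ++ l2)) := by
    calc g i * P g (l1 ++ i :: l2) = g i * (P g l1 * (g i * P g l2)) := by
          rw [P_append, P_cons]
      _ = ((-1 : K) ^ l1.length) • (P g l1 * (g i * (g i * P g l2))) := by
          rw [pass_through' (K := K) g hsw l1 i h1]
      _ = ((-1 : K) ^ l1.length) • (c • (P g l1 * P g l2)) := by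
          rw [hgig, mul_smul_comm]
      _ = ((-1 : K) ^ l1.length) • (c • P g (l1 ++ l2)) := by rw [P_append]
  have e2 : P g (l1 ++ i :: l2) * g i =
      ((-1 : K) ^ l2.length) • (c • P g (l1 ++ l2)) := by
    calc P g (l1 ++ i :: l2) * g i = P g l1 * (g i * (P g l2 * (g i * 1))) := by
          rw [P_append, P_cons, mul_assoc, mul_assoc, mul_one]
      _ = P g l1 * (g i * (((-1 : K) ^ l2.length) • (g i * (P g l2 * 1)))) := by
          rw [pass_through (K := K) g hsw l2 i h2]
      _ = ((-1 : K) ^ l2.length) • (c • (P g l1 * P g l2)) := by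
          rw [mul_one, mul_smul_comm, mul_smul_comm, hgig, mul_smul_comm]
      _ = ((-1 : K) ^ l2.length) • (c • P g (l1 ++ l2)) := by rw [P_append]
  rw [e1, e2, hodd, neg_smul, neg_add_cancel]

end DetDimFourAux

end Aux

open DetDimFourAux in
/-- In dimension 4 (char K ≠ 2), the paper's alternative, non-adjugatable
determinant formula `Det(A) = ⟦A⟧₂₃ A ⟦⟦A⟧₂₃ A⟧₁₄`: with
`ξ = reverse x * x` (grades {0,1,4}), `ξ * (algebraMap s - ξ)` is a scalar. -/
theorem det_dim_four_nonadjugatable (K V : Type*) [Field K] [AddCommGroup V]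
    [Module K V] [FiniteDimensional K V] (h2 : (2 : K) ≠ 0)
    (hdim : Module.finrank K V = 4)
    (Q : QuadraticForm K V) (x : CliffordAlgebra Q) :
    ∃ s d : K,
      (reverse x * x) * (algebraMap K (CliffordAlgebra Q) s - reverse x * x) =
        algebraMap K (CliffordAlgebra Q) d := by
  haveI : Invertible (2 : K) := invertibleOfNonzero h2
  obtain ⟨v, hv⟩ :=
    LinearMap.BilinForm.exists_orthogonal_basis (B := QuadraticMap.associatedHom K Q)
      ⟨fun x y => QuadraticMap.associated_isSymm K Q x y⟩
  let b : Module.Basis (Fin 4) K V := v.reindex (finCongr hdim)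
  have hb : ∀ i : Fin 4, b i = v ((finCongr hdim).symm i) := fun i => v.reindex_apply _ _
  have hpolar : ∀ i j : Fin 4, i ≠ j → QuadraticMap.polar Q (b i) (b j) = 0 := by
    intro i j hij
    have h0 : QuadraticMap.associatedHom K Q (b i) (b j) = 0 := by
      rw [hb i, hb j]
      exact hv fun h => hij (by simpa using congrArg (finCongr hdim) h)
    have h1 := congrArg (fun B : LinearMap.BilinForm K V => B (b i) (b j))
      (QuadraticMap.two_nsmul_associated K Q)
    simp only [LinearMap.smul_apply, QuadraticMap.polarBilin_apply_apply, h0,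
      smul_zero] at h1
    exact h1.symm
  set g : Fin 4 → CliffordAlgebra Q := fun i => ι Q (b i) with hg
  have hsw : ∀ i j : Fin 4, i ≠ j → g i * g j = -(g j * g i) := by
    intro i j hij
    refine eq_neg_of_add_eq_zero_left ?_
    rw [hg]
    rw [ι_mul_ι_add_swap, hpolar i j hij, map_zero]
  have hsq : ∀ i : Fin 4, ∃ c : K, g i * g i = algebraMap K (CliffordAlgebra Q) c :=
    fun i => ⟨Q (b i), ι_sq_scalar Q (b i)⟩
  -- the span of the sorted monomials
  set T : Submodule K (CliffordAlgebra Q) :=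
    Submodule.span K {z | ∃ l : List (Fin 4), l.Pairwise (· < ·) ∧ z = P g l} with hT
  have h1T : (1 : CliffordAlgebra Q) ∈ T :=
    Submodule.subset_span ⟨[], List.Pairwise.nil, rfl⟩
  have mulT : ∀ (i : Fin 4), ∀ y ∈ T, g i * y ∈ T := by
    intro i y hy
    induction hy using Submodule.span_induction with
    | mem z hz =>
      obtain ⟨l, hl, rfl⟩ := hz
      obtain ⟨c, l', hl', _, heq⟩ := insert_lemma g hsw hsq l hl i
      rw [heq]
      exact Submodule.smul_mem _ _ (Submodule.subset_span ⟨l', hl', rfl⟩)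
    | zero => rw [mul_zero]; exact Submodule.zero_mem _
    | add y z _ _ hy hz => rw [mul_add]; exact Submodule.add_mem _ hy hz
    | smul a y _ hy => rw [mul_smul_comm]; exact Submodule.smul_mem _ _ hy
  have prodT : ∀ (l : List (Fin 4)), ∀ y ∈ T, P g l * y ∈ T := by
    intro l
    induction l with
    | nil => intro y hy; rw [P_nil, one_mul]; exact hy
    | cons i t ih =>
      intro y hy
      rw [P_cons, mul_assoc]
      exact mulT i _ (ih y hy)
  have mulT2 : ∀ z ∈ T, ∀ y ∈ T, z * y ∈ T := by
    intro z hz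
    induction hz using Submodule.span_induction with
    | mem z hz =>
      obtain ⟨l, _, rfl⟩ := hz
      exact prodT l
    | zero => intro y hy; rw [zero_mul]; exact Submodule.zero_mem _
    | add z w _ _ hz hw => intro y hy; rw [add_mul]; exact Submodule.add_mem _ (hz y hy) (hw y hy)
    | smul a z _ hz => intro y hy; rw [smul_mul_assoc]; exact Submodule.smul_mem _ _ (hz y hy)
  have hι : ∀ w : V, ∀ y ∈ T, ι Q w * y ∈ T := by
    have key : ∀ w ∈ Submodule.span K (Set.range b), ∀ y ∈ T, ι Q w * y ∈ T := by
      intro w hw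
      induction hw using Submodule.span_induction with
      | mem w hw =>
        obtain ⟨i, rfl⟩ := hw
        exact mulT i
      | zero => intro y hy; rw [map_zero, zero_mul]; exact Submodule.zero_mem _
      | add w₁ w₂ _ _ h1 h2 =>
        intro y hy
        rw [map_add, add_mul]
        exact Submodule.add_mem _ (h1 y hy) (h2 y hy)
      | smul a w _ hw =>
        intro y hy
        rw [map_smul, smul_mul_assoc]
        exact Submodule.smul_mem _ _ (hw y hy)
    intro w
    exact key w (by rw [b.span_eq]; trivial)
  have htop : ∀ z : CliffordAlgebra Q, z ∈ T := by
    have main : ∀ z : CliffordAlgebra Q, z ∈ T ∧ ∀ y ∈ T, z * y ∈ T := by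
      intro z
      induction z using CliffordAlgebra.induction with
      | algebraMap r =>
        constructor
        · rw [Algebra.algebraMap_eq_smul_one]
          exact Submodule.smul_mem _ _ h1T
        · intro y hy
          rw [← Algebra.smul_def]
          exact Submodule.smul_mem _ _ hy
      | ι w =>
        refine ⟨?_, hι w⟩
        have := hι w 1 h1T
        rwa [mul_one] at this
      | mul a c ha hc =>
        exact ⟨ha.2 c hc.1, fun y hy => by rw [mul_assoc]; exact ha.2 _ (hc.2 y hy)⟩
      | add a c ha hc =>
        exact ⟨Submodule.add_mem _ ha.1 hc.1,
          fun y hy => by rw [add_mul]; exact Submodule.add_mem _ (ha.2 y hy) (hc.2 y hy)⟩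
    exact fun z => (main z).1
  -- reverse acts by ±1 on monomials
  have hrevP : ∀ l : List (Fin 4), reverse (P g l) = P g l.reverse := by
    intro l
    have : P g l = ((l.map b).map (ι Q)).prod := by
      rw [List.map_map]; rfl
    rw [this, reverse_prod_map_ι, ← List.map_reverse, ← List.map_reverse, List.map_map]
    rfl
  have hrev_sign : ∀ l : List (Fin 4), l.Pairwise (· < ·) →
      reverse (P g l) = ((-1 : K) ^ (l.length.choose 2)) • P g l := by
    intro l hl
    rw [hrevP, rev_eq (K := K) g hsw l hl]
  -- decompose into the ±1 "eigenspaces"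
  set Tp : Submodule K (CliffordAlgebra Q) :=
    Submodule.span K {z | ∃ l : List (Fin 4), l.Pairwise (· < ·) ∧
      (l.length = 0 ∨ l.length = 1 ∨ l.length = 4) ∧ z = P g l} with hTp
  set Tm : Submodule K (CliffordAlgebra Q) :=
    Submodule.span K {z | ∃ l : List (Fin 4), l.Pairwise (· < ·) ∧
      (l.length = 2 ∨ l.length = 3) ∧ z = P g l} with hTm
  have hTsub : T ≤ Tp ⊔ Tm := by
    rw [hT]
    refine Submodule.span_le.2 ?_
    rintro z ⟨l, hl, rfl⟩
    have hlen : l.length ≤ 4 := by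
      have := hl.nodup.length_le_card
      simpa using this
    have : l.length = 0 ∨ l.length = 1 ∨ l.length = 4 ∨ l.length = 2 ∨ l.length = 3 := by omega
    rcases this with h | h | h | h | h
    · exact Submodule.mem_sup_left (Submodule.subset_span ⟨l, hl, Or.inl h, rfl⟩)
    · exact Submodule.mem_sup_left (Submodule.subset_span ⟨l, hl, Or.inr (Or.inl h), rfl⟩)
    · exact Submodule.mem_sup_left (Submodule.subset_span ⟨l, hl, Or.inr (Or.inr h), rfl⟩)
    · exact Submodule.mem_sup_right (Submodule.subset_span ⟨l, hl, Or.inl h, rfl⟩)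
    · exact Submodule.mem_sup_right (Submodule.subset_span ⟨l, hl, Or.inr h, rfl⟩)
  have hTpfix : ∀ z ∈ Tp, reverse z = z := by
    intro z hz
    induction hz using Submodule.span_induction with
    | mem z hz =>
      obtain ⟨l, hl, hlen, rfl⟩ := hz
      rw [hrev_sign l hl]
      rcases hlen with h | h | h <;> rw [h] <;> norm_num [Nat.choose]
    | zero => rw [map_zero]
    | add y z _ _ hy hz => rw [map_add, hy, hz]
    | smul a y _ hy => rw [map_smul, hy]
  have hTmneg : ∀ z ∈ Tm, reverse z = -z := by
    intro z hz
    induction hz using Submodule.span_induction with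
    | mem z hz =>
      obtain ⟨l, hl, hlen, rfl⟩ := hz
      rw [hrev_sign l hl]
      rcases hlen with h | h <;> rw [h] <;> norm_num [Nat.choose]
    | zero => rw [map_zero, neg_zero]
    | add y z _ _ hy hz => rw [map_add, hy, hz, neg_add]
    | smul a y _ hy => rw [map_smul, hy, smul_neg]
  -- ξ is reverse-invariant, hence in Tp
  set ξ : CliffordAlgebra Q := reverse x * x with hξ
  have hrevξ : reverse ξ = ξ := by
    rw [hξ, reverse.map_mul, reverse_reverse]
  have hξTp : ξ ∈ Tp := by
    obtain ⟨m, hm, n, hn, hmn⟩ := Submodule.mem_sup.1 (hTsub (htop ξ))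
    have hfix : m + -n = m + n := by
      have h1 : reverse (m + n) = m + -n := by
        rw [map_add, hTpfix m hm, hTmneg n hn]
      rw [← h1, hmn]
      exact hrevξ
    have hneg : -n = n := add_left_cancel hfix
    have hn0 : n = 0 := by
      have h2n : (2 : K) • n = 0 := by
        rw [two_smul]
        nth_rewrite 1 [← hneg]
        rw [neg_add_cancel]
      rcases smul_eq_zero.1 h2n with h | h
      · exact absurd h h2
      · exact h
    rw [← hmn, hn0, add_zero]
    exact hm
  -- Tp is contained in scalars ⊔ vectors ⊔ pseudoscalar line
  set ω : CliffordAlgebra Q := P g [0, 1, 2, 3] with hω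
  have hTple : Tp ≤ LinearMap.range (Algebra.linearMap K (CliffordAlgebra Q)) ⊔
      (LinearMap.range (ι Q) ⊔ Submodule.span K {ω}) := by
    rw [hTp]
    refine Submodule.span_le.2 ?_
    rintro z ⟨l, hl, hlen, rfl⟩
    rcases hlen with h | h | h
    · rw [List.length_eq_zero_iff] at h
      subst h
      refine Submodule.mem_sup_left ⟨1, ?_⟩
      simp [P]
    · rw [List.length_eq_one_iff] at h
      obtain ⟨i, rfl⟩ := h
      refine Submodule.mem_sup_right (Submodule.mem_sup_left ⟨b i, ?_⟩)
      simp [P, hg]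
    · -- length 4 sorted list in Fin 4 must be [0,1,2,3]
      have hl4 : l = [0, 1, 2, 3] := by
        match l, h with
        | [a, b', c', d'], _ =>
          rw [List.pairwise_cons, List.pairwise_cons, List.pairwise_cons] at hl
          have hab : a < b' := hl.1 b' (by simp)
          have hbc : b' < c' := hl.2.1 c' (by simp)
          have hcd : c' < d' := hl.2.2.1 d' (by simp)
          have ha' : (a : ℕ) < b' := hab
          have hb' : (b' : ℕ) < c' := hbc
          have hc' : (c' : ℕ) < d' := hcd
          have hd4 : (d' : ℕ) < 4 := d'.is_lt
          have hvals : (a : ℕ) = 0 ∧ (b' : ℕ) = 1 ∧ (c' : ℕ) = 2 ∧ (d' : ℕ) = 3 := by omega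
          have ea : a = 0 := Fin.ext hvals.1
          have eb : b' = 1 := Fin.ext hvals.2.1
          have ec : c' = 2 := Fin.ext hvals.2.2.1
          have ed : d' = 3 := Fin.ext hvals.2.2.2
          rw [ea, eb, ec, ed]
      subst hl4
      exact Submodule.mem_sup_right
        (Submodule.mem_sup_right (Submodule.mem_span_singleton_self ω))
  obtain ⟨y1, hy1, y2, hy2, hsum⟩ := Submodule.mem_sup.1 (hTple hξTp)
  obtain ⟨cc, hcc⟩ := hy1
  obtain ⟨yv, hyv, yo, hyo, hsum2⟩ := Submodule.mem_sup.1 hy2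
  obtain ⟨w, hw⟩ := hyv
  obtain ⟨pw, hpw⟩ := Submodule.mem_span_singleton.1 hyo
  -- key multiplicative facts
  obtain ⟨c4, hc4⟩ := sq_scalar g hsw hsq [0, 1, 2, 3] (by decide)
  have hanti : ∀ z : V, ι Q z * ω + ω * ι Q z = 0 := by
    have key : ∀ z ∈ Submodule.span K (Set.range b), ι Q z * ω + ω * ι Q z = 0 := by
      intro z hz
      induction hz using Submodule.span_induction with
      | mem z hz =>
        obtain ⟨i, rfl⟩ := hz
        fin_cases i
        · exact anti_mid g hsw hsq [] [1, 2, 3] 0 (by decide) (by decide) (by norm_num)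
        · exact anti_mid g hsw hsq [0] [2, 3] 1 (by decide) (by decide) (by norm_num)
        · exact anti_mid g hsw hsq [0, 1] [3] 2 (by decide) (by decide) (by norm_num)
        · exact anti_mid g hsw hsq [0, 1, 2] [] 3 (by decide) (by decide) (by norm_num)
      | zero => simp
      | add z₁ z₂ _ _ hz1 hz2 =>
        rw [map_add, add_mul, mul_add]
        calc ι Q z₁ * ω + ι Q z₂ * ω + (ω * ι Q z₁ + ω * ι Q z₂)
            = (ι Q z₁ * ω + ω * ι Q z₁) + (ι Q z₂ * ω + ω * ι Q z₂) := by abel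
          _ = 0 := by rw [hz1, hz2, add_zero]
      | smul a z _ hz =>
        rw [map_smul, smul_mul_assoc, mul_smul_comm, ← smul_add, hz, smul_zero]
    intro z
    exact key z (by rw [b.span_eq]; trivial)
  -- final computation
  set u : CliffordAlgebra Q := ι Q w + pw • ω with hu
  have hξeq : ξ = algebraMap K (CliffordAlgebra Q) cc + u := by
    rw [← hsum, ← hsum2, ← hw, ← hpw, ← hcc, hu]
    simp [Algebra.linearMap_apply, add_assoc]
  have hu2 : u * u = algebraMap K (CliffordAlgebra Q) (Q w + pw * pw * c4) := by
    have expand : u * u = ι Q w * ι Q w + pw • (ι Q w * ω + ω * ι Q w) +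
        (pw * pw) • (ω * ω) := by
      rw [hu]
      simp only [smul_mul_assoc, mul_smul_comm, smul_smul, smul_add, mul_add, add_mul]
      abel
    rw [expand, hanti w, smul_zero, add_zero, ι_sq_scalar, hc4, Algebra.smul_def,
      ← map_mul, ← map_add]
  refine ⟨cc + cc, cc * cc - (Q w + pw * pw * c4), ?_⟩
  have hsub : algebraMap K (CliffordAlgebra Q) (cc + cc) - ξ =
      algebraMap K (CliffordAlgebra Q) cc - u := by
    rw [hξeq, map_add]
    abel
  have key : ∀ (uu : CliffordAlgebra Q) (t1 t2 : K),
      uu * uu = algebraMap K (CliffordAlgebra Q) t2 →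
      (algebraMap K (CliffordAlgebra Q) t1 + uu) *
        (algebraMap K (CliffordAlgebra Q) t1 - uu) =
        algebraMap K (CliffordAlgebra Q) (t1 * t1 - t2) := by
    intro uu t1 t2 h
    rw [mul_sub, add_mul, add_mul, ← map_mul, ← Algebra.commutes t1 uu, h, map_sub]
    abel
  rw [hsub, hξeq]
  exact key u cc _ hu2
end

section
/- Let K be a field of characteristic not 2, V a K-vector space of dimension 5, Q a quadratic form on V, and e : Basis (Fin 5) K V an orthogonal basis for Q (i.e. the polar form of Q vanishes on distinct basis vectors). Let ω denote the pseudoscalar, the ordered product ι Q (e 0) * ι Q (e 1) * ι Q (e 2) * ι Q (e 3) * ι Q (e 4). Then for every element x of the Clifford algebra of Q there exist s, t, u, d : K such that, setting ξ := x * reverse x and η := ξ * (algebraMap s + t • ω - ξ), one has η * (algebraMap u - η) = algebraMap d. (This is the paper's five-dimensional determinant formula Det(A) = A⟦A⟧₂₃⟦A⟦A⟧₂₃⟧₁₄⟦A⟦A⟧₂₃⟦A⟦A⟧₂₃⟧₁₄⟧₅: ξ has only grades {0,1,4,5}, so ⟦ξ⟧₁₄ = algebraMap s + t•ω − ξ with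 s and t twice its grade-0 and grade-5 coefficients; η has only grades {0,5}, so ⟦η⟧₅ = algebraMap u − η with u twice its grade-0 coefficient; the scalars s, t, u are existentially quantified.) -/
open CliffordAlgebra

namespace DetDim5

variable {K V : Type*} [Field K] [AddCommGroup V] [Module K V]
  (Q : QuadraticForm K V) (e : Module.Basis (Fin 5) K V)

/-- ordered monomial -/
noncomputable def P (l : List (Fin 5)) : CliffordAlgebra Q :=
  (l.map fun i => ι Q (e i)).prod

@[simp] lemma P_nil : P Q e [] = 1 := rfl

@[simp] lemma P_cons (i : Fin 5) (l : List (Fin 5)) :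
    P Q e (i :: l) = ι Q (e i) * P Q e l := by simp [P]

variable (horth : ∀ i j : Fin 5, i ≠ j → QuadraticMap.polar Q (e i) (e j) = 0)

include horth in
lemma hA {i j : Fin 5} (h : i ≠ j) :
    ι Q (e i) * ι Q (e j) = -(ι Q (e j) * ι Q (e i))  :=
  eq_neg_of_add_eq_zero_left <| by
    rw [ι_mul_ι_add_swap, horth i j h, map_zero]

include horth in
/-- moving a generator through a monomial not containing it -/
lemma moveD : ∀ (l : List (Fin 5)) (i : Fin 5), i ∉ l →
    P Q e l * ι Q (e i) = ((-1 : K)) ^ l.length • (ι Q (e i) * P Q e l)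
  | [], i, _ => by simp
  | j :: t, i, h => by
    have hij : i ≠ j := fun hh => h (hh ▸ (List.mem_cons_self : j ∈ j :: t))
    have ht : i ∉ t := fun hh => h (List.mem_cons_of_mem _ hh)
    rw [P_cons, mul_assoc, moveD t i ht, List.length_cons, pow_succ,
      mul_smul_comm, ← mul_assoc, hA Q e horth (Ne.symm hij)]
    simp [smul_smul, mul_comm, mul_assoc]

include horth in
/-- moving a generator through a nodup monomial containing it -/
lemma moveMem : ∀ (l : List (Fin 5)) (i : Fin 5), l.Nodup → i ∈ l →
    P Q e l * ι Q (e i) = -(((-1 : K)) ^ l.length • (ι Q (e i) * P Q e l))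
  | [], i, _, h => absurd h (List.not_mem_nil)
  | j :: t, i, hnd, h => by
    have hndt : t.Nodup := (List.nodup_cons.mp hnd).2
    have hjt : j ∉ t := (List.nodup_cons.mp hnd).1
    rcases eq_or_ne i j with rfl | hij
    · rw [P_cons, mul_assoc, moveD Q e horth t i hjt, List.length_cons, pow_succ,
        mul_smul_comm, ← mul_assoc]
      simp [smul_smul, mul_comm, mul_assoc, ι_sq_scalar]
    · have hit : i ∈ t := (List.mem_cons.mp h).resolve_left hij
      rw [P_cons, mul_assoc, moveMem t i hndt hit, List.length_cons, pow_succ,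
        mul_neg, mul_smul_comm, ← mul_assoc, hA Q e horth (Ne.symm hij)]
      simp [smul_smul, mul_comm, mul_assoc]

include horth in
/-- normal form for a generator times a sorted monomial -/
lemma normL : ∀ (l : List (Fin 5)), l.Pairwise (· < ·) → ∀ i : Fin 5,
    ∃ (c : K) (l' : List (Fin 5)), l'.Pairwise (· < ·) ∧
      (∀ k ∈ l', k = i ∨ k ∈ l) ∧
      ((i ∉ l ∧ l'.length = l.length + 1) ∨ (i ∈ l ∧ l'.length + 1 = l.length)) ∧
      ι Q (e i) * P Q e l = c • P Q e l'
  | [], _, i => ⟨1, [i], List.pairwise_singleton _ i, by simp, by simp, by simp⟩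
  | j :: t, hs, i => by
    have hst : t.Pairwise (· < ·) := hs.of_cons
    have hjt : ∀ k ∈ t, j < k := fun k hk => List.rel_of_pairwise_cons hs hk
    rcases lt_trichotomy i j with hij | rfl | hij
    · refine ⟨1, i :: j :: t, ?_, by simp +contextual, ?_, by simp⟩
      · exact List.pairwise_cons.mpr ⟨fun k hk => by
          rcases List.mem_cons.mp hk with rfl | hk
          · exact hij
          · exact hij.trans (hjt k hk), hs⟩
      · left
        constructor
        · intro hmem
          rcases List.mem_cons.mp hmem with rfl | hmem
          · exact absurd hij (lt_irrefl i)
          · exact absurd (hij.trans (hjt i hmem)) (lt_irrefl i)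
        · simp
    · refine ⟨Q (e i), t, hst, fun k hk => Or.inr (List.mem_cons_of_mem _ hk),
        Or.inr ⟨(List.mem_cons_self : i ∈ i :: t), by simp⟩, ?_⟩
      rw [P_cons, ← mul_assoc, ι_sq_scalar, Algebra.smul_def]
    · obtain ⟨c, l', hs', hmem', hlen', heq'⟩ := normL t hst i
      refine ⟨-c, j :: l', ?_, ?_, ?_, ?_⟩
      · refine List.pairwise_cons.mpr ⟨fun k hk => ?_, hs'⟩
        rcases hmem' k hk with rfl | hk
        · exact hij
        · exact hjt k hk
      · intro k hk
        rcases List.mem_cons.mp hk with rfl | hk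
        · exact Or.inr ((List.mem_cons_self : k ∈ k :: t))
        · rcases hmem' k hk with rfl | hk
          · exact Or.inl rfl
          · exact Or.inr (List.mem_cons_of_mem _ hk)
      · have hij' : i ≠ j := ne_of_gt hij
        rcases hlen' with ⟨h1, h2⟩ | ⟨h1, h2⟩
        · exact Or.inl ⟨by simp [List.mem_cons, hij', h1], by simp [h2]⟩
        · exact Or.inr ⟨List.mem_cons_of_mem _ h1, by simp [← h2]⟩
      · rw [P_cons, ← mul_assoc, hA Q e horth (ne_of_gt hij), neg_mul, mul_assoc, heq',
          mul_smul_comm, ← P_cons, neg_smul]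

/-- span of sorted monomials with length in `s` -/
noncomputable def Mset (s : Set ℕ) : Submodule K (CliffordAlgebra Q) :=
  Submodule.span K {m | ∃ l : List (Fin 5), l.Pairwise (· < ·) ∧ l.length ∈ s ∧ m = P Q e l}

include horth in
lemma ι_mul_memM {x : CliffordAlgebra Q} (i : Fin 5)
    (hx : x ∈ Mset Q e Set.univ) : ι Q (e i) * x ∈ Mset Q e Set.univ := by
  induction hx using Submodule.span_induction with
  | mem m hm =>
    obtain ⟨l, hs, -, rfl⟩ := hm
    obtain ⟨c, l', hs', -, -, heq⟩ := normL Q e horth l hs i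
    rw [heq]
    exact Submodule.smul_mem _ _ (Submodule.subset_span ⟨l', hs', trivial, rfl⟩)
  | zero => simp
  | add a b _ _ ha hb => rw [mul_add]; exact Submodule.add_mem _ ha hb
  | smul c a _ ha => rw [mul_smul_comm]; exact Submodule.smul_mem _ _ ha

include horth in
lemma ιv_mul_memM {x : CliffordAlgebra Q} (v : V)
    (hx : x ∈ Mset Q e Set.univ) : ι Q v * x ∈ Mset Q e Set.univ := by
  have hv : v = ∑ i : Fin 5, (e.repr v) i • e i := (e.sum_repr v).symm
  rw [hv, map_sum]
  rw [Finset.sum_mul]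
  refine Submodule.sum_mem _ fun i _ => ?_
  rw [map_smul, smul_mul_assoc]
  exact Submodule.smul_mem _ _ (ι_mul_memM Q e horth i hx)

include horth in
lemma memM (x : CliffordAlgebra Q) : x ∈ Mset Q e Set.univ := by
  have h1 : (1 : CliffordAlgebra Q) ∈ Mset Q e Set.univ :=
    Submodule.subset_span ⟨[], List.Pairwise.nil, trivial, rfl⟩
  have key : ∀ y : CliffordAlgebra Q, ∀ m ∈ Mset Q e Set.univ,
      y * m ∈ Mset Q e Set.univ := by
    intro y
    induction y using CliffordAlgebra.induction with
    | algebraMap r => intro m hm; rw [Algebra.algebraMap_eq_smul_one, smul_mul_assoc, one_mul]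
                      exact Submodule.smul_mem _ _ hm
    | ι v => exact fun m hm => ιv_mul_memM Q e horth v hm
    | mul a b ha hb => intro m hm; rw [mul_assoc]; exact ha _ (hb _ hm)
    | add a b ha hb => intro m hm; rw [add_mul]; exact Submodule.add_mem _ (ha _ hm) (hb _ hm)
  simpa using key x 1 h1

include horth in
/-- reverse acts on monomials by the sign (-1)^(n choose 2) -/
lemma revP : ∀ (l : List (Fin 5)), l.Nodup →
    reverse (Q := Q) (P Q e l) = ((-1 : K)) ^ (l.length.choose 2) • P Q e l
  | [], _ => by simp
  | i :: t, hnd => by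
    have hndt : t.Nodup := (List.nodup_cons.mp hnd).2
    have hit : i ∉ t := (List.nodup_cons.mp hnd).1
    rw [P_cons, reverse.map_mul, reverse_ι, revP t hndt, smul_mul_assoc,
      moveD Q e horth t i hit, smul_smul, List.length_cons]
    rw [Nat.choose_succ_succ, Nat.choose_one_right, pow_add, mul_comm]

include horth in
/-- squares of nodup monomials are scalars -/
lemma sqP : ∀ (l : List (Fin 5)), l.Nodup →
    ∃ c : K, P Q e l * P Q e l = algebraMap K (CliffordAlgebra Q) c
  | [], _ => ⟨1, by simp⟩
  | i :: t, hnd => by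
    obtain ⟨c, hc⟩ := sqP t (List.nodup_cons.mp hnd).2
    have hit : i ∉ t := (List.nodup_cons.mp hnd).1
    refine ⟨(-1 : K) ^ t.length * Q (e i) * c, ?_⟩
    rw [P_cons, mul_assoc, ← mul_assoc (P Q e t), moveD Q e horth t i hit,
      smul_mul_assoc, mul_smul_comm, ← mul_assoc, ← mul_assoc,
      ι_sq_scalar, mul_assoc, hc]
    simp [Algebra.smul_def, map_mul, map_pow, mul_assoc]

include horth in
/-- general sign rule for swapping two monomials -/
lemma swapL (m : List (Fin 5)) (hm : m.Nodup) : ∀ (l : List (Fin 5)),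
    P Q e l * P Q e m =
      ((-1 : K)) ^ (l.length * m.length + l.countP (· ∈ m)) • (P Q e m * P Q e l)
  | [] => by simp
  | i :: t => by
    have key : ι Q (e i) * P Q e m =
        ((-1 : K)) ^ (m.length + if i ∈ m then 1 else 0) • (P Q e m * ι Q (e i)) := by
      by_cases him : i ∈ m
      · rw [moveMem Q e horth m i hm him]
        simp only [him, if_true, pow_succ, pow_one, smul_neg, smul_smul]
        have h1 : ((-1 : K)) ^ m.length * -1 * (-1) ^ m.length = -1 := by
          rw [mul_right_comm, mul_comm ((-1:K)^m.length * (-1)^m.length), ← pow_add,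
            ← two_mul, pow_mul]
          norm_num
        rw [h1]
        simp
      · rw [moveD Q e horth m i him]
        simp [him, smul_smul, ← pow_add]
    rw [P_cons, mul_assoc, swapL m hm t, mul_smul_comm, ← mul_assoc, key,
      smul_mul_assoc, smul_smul, mul_assoc, ← P_cons, ← pow_add]
    congr 1
    have : (i :: t).countP (fun k => decide (k ∈ m)) =
        t.countP (fun k => decide (k ∈ m)) + if i ∈ m then 1 else 0 := by
      rw [List.countP_cons]
      simp
    simp only [List.length_cons, this]
    congr 1
    ring

lemma sorted_len_le {l : List (Fin 5)} (hs : l.Pairwise (· < ·)) : l.length ≤ 5 := by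
  simpa using hs.nodup.length_le_card

lemma sorted_eq_sorted {l m : List (Fin 5)} (hs : l.Pairwise (· < ·)) (hm : m.Pairwise (· < ·))
    (h : l.toFinset = m.toFinset) : l = m :=
  List.Perm.eq_of_pairwise (fun _ _ _ _ h1 h2 => absurd (h1.trans h2) (lt_irrefl _)) hs hm
    (List.perm_of_nodup_nodup_toFinset_eq hs.nodup hm.nodup h)

lemma sorted5 {l : List (Fin 5)} (hs : l.Pairwise (· < ·)) (h5 : l.length = 5) :
    l = [0, 1, 2, 3, 4] := by
  refine sorted_eq_sorted hs (by decide) ?_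
  have h1 : l.toFinset.card = 5 := by rw [List.toFinset_card_of_nodup hs.nodup, h5]
  have h2 : l.toFinset = Finset.univ := Finset.eq_univ_of_card _ (by simpa using h1)
  rw [h2]; decide

lemma count3 {l m : List (Fin 5)} (hl : l.Pairwise (· < ·)) (hm : m.Pairwise (· < ·))
    (h4l : l.length = 4) (h4m : m.length = 4) (hne : l ≠ m) :
    l.countP (· ∈ m) = 3 := by
  classical
  have hA : l.toFinset.card = 4 := by rw [List.toFinset_card_of_nodup hl.nodup, h4l]
  have hB : m.toFinset.card = 4 := by rw [List.toFinset_card_of_nodup hm.nodup, h4m]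
  have hcap : (l.toFinset ∩ m.toFinset).card = 3 := by
    have hun : (l.toFinset ∪ m.toFinset).card ≤ 5 :=
      le_trans (Finset.card_le_univ _) (by simp)
    have h := Finset.card_union_add_card_inter l.toFinset m.toFinset
    have hle : (l.toFinset ∩ m.toFinset).card ≤ 4 :=
      hA ▸ Finset.card_le_card Finset.inter_subset_left
    have hne4 : (l.toFinset ∩ m.toFinset).card ≠ 4 := by
      intro h4
      have h1 : l.toFinset ∩ m.toFinset = l.toFinset :=
        Finset.eq_of_subset_of_card_le Finset.inter_subset_left (by omega)
      have hsub : l.toFinset ⊆ m.toFinset := by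
        rw [← h1]; exact Finset.inter_subset_right
      have h3 : l.toFinset = m.toFinset :=
        Finset.eq_of_subset_of_card_le hsub (by omega)
      exact hne (sorted_eq_sorted hl hm h3)
    omega
  have hfil : l.filter (· ∈ m) = l.filter (· ∈ m.toFinset) := by
    apply List.filter_congr
    intro k _
    simp [List.mem_toFinset]
  rw [List.countP_eq_length_filter, hfil,
    ← List.toFinset_card_of_nodup (hl.nodup.filter _), List.toFinset_filter]
  convert hcap using 2
  ext k
  simp [List.mem_toFinset]

@[simp] lemma P_singleton (i : Fin 5) : P Q e [i] = ι Q (e i) := by simp [P]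

/-- the pseudoscalar -/
noncomputable def om : CliffordAlgebra Q := P Q e [0, 1, 2, 3, 4]

/-- span of 1 and the pseudoscalar -/
noncomputable def Z : Submodule K (CliffordAlgebra Q) :=
  Submodule.span K {(1 : CliffordAlgebra Q), om Q e}

lemma algebraMap_mem_Z (r : K) : algebraMap K (CliffordAlgebra Q) r ∈ Z Q e := by
  rw [Algebra.algebraMap_eq_smul_one]
  exact Submodule.smul_mem _ _ (Submodule.subset_span (Set.mem_insert _ _))

lemma om_mem_Z : om Q e ∈ Z Q e :=
  Submodule.subset_span (Set.mem_insert_of_mem _ rfl)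

include horth in
lemma h14 (i : Fin 5) {l : List (Fin 5)} (hs : l.Pairwise (· < ·)) (h4 : l.length = 4) :
    ι Q (e i) * P Q e l + P Q e l * ι Q (e i) ∈ Z Q e := by
  by_cases him : i ∈ l
  · rw [moveMem Q e horth l i hs.nodup him, h4]
    norm_num
  · obtain ⟨c, l', hs', -, hlen, heq⟩ := normL Q e horth l hs i
    rcases hlen with ⟨-, hl5⟩ | ⟨habs, -⟩
    · rw [moveD Q e horth l i him, h4, heq]
      have h5 : l' = [0, 1, 2, 3, 4] := sorted5 hs' (by omega)
      rw [h5, show P Q e [0, 1, 2, 3, 4] = om Q e from rfl]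
      norm_num
      exact Submodule.add_mem _ (Submodule.smul_mem _ _ (om_mem_Z Q e))
        (Submodule.smul_mem _ _ (om_mem_Z Q e))
    · exact absurd habs him

include horth in
lemma pairZ {m₁ m₂ : CliffordAlgebra Q}
    (h₁ : ∃ l : List (Fin 5), l.Pairwise (· < ·) ∧ l.length ∈ ({1, 4} : Set ℕ) ∧ m₁ = P Q e l)
    (h₂ : ∃ l : List (Fin 5), l.Pairwise (· < ·) ∧ l.length ∈ ({1, 4} : Set ℕ) ∧ m₂ = P Q e l) :
    m₁ * m₂ + m₂ * m₁ ∈ Z Q e := by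
  obtain ⟨l, hsl, hll, rfl⟩ := h₁
  obtain ⟨m, hsm, hlm, rfl⟩ := h₂
  rcases hll with hl1 | hl4 <;> rcases hlm with hm1 | hm4
  · -- (1,1)
    obtain ⟨i, rfl⟩ := List.length_eq_one_iff.mp hl1
    obtain ⟨j, rfl⟩ := List.length_eq_one_iff.mp hm1
    simp only [P_singleton]
    rcases eq_or_ne i j with rfl | hij
    · rw [ι_sq_scalar, ← map_add]
      exact algebraMap_mem_Z Q e _
    · rw [hA Q e horth hij, neg_add_cancel]
      exact Submodule.zero_mem _
  · obtain ⟨i, rfl⟩ := List.length_eq_one_iff.mp hl1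
    simp only [P_singleton]
    exact h14 Q e horth i hsm hm4
  · obtain ⟨j, rfl⟩ := List.length_eq_one_iff.mp hm1
    simp only [P_singleton]
    rw [add_comm]
    exact h14 Q e horth j hsl hl4
  · -- (4,4)
    rcases eq_or_ne l m with rfl | hne
    · obtain ⟨c, hc⟩ := sqP Q e horth l hsl.nodup
      rw [hc, ← map_add]
      exact algebraMap_mem_Z Q e _
    · rw [swapL Q e horth m hsm.nodup l, count3 hsl hsm hl4 hm4 hne, hl4, hm4]
      norm_num

lemma bilin (S : Set (CliffordAlgebra Q)) (Z' : Submodule K (CliffordAlgebra Q))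
    (hp : ∀ m₁ ∈ S, ∀ m₂ ∈ S, m₁ * m₂ + m₂ * m₁ ∈ Z') :
    ∀ v ∈ Submodule.span K S, ∀ w ∈ Submodule.span K S, v * w + w * v ∈ Z' := by
  intro v hv
  induction hv using Submodule.span_induction with
  | mem m hm =>
    intro w hw
    induction hw using Submodule.span_induction with
    | mem m' hm' => exact hp m hm m' hm'
    | zero => simp
    | add a b _ _ ha hb =>
      have h : m * (a + b) + (a + b) * m = (m * a + a * m) + (m * b + b * m) := by
        noncomm_ring
      rw [h]; exact Submodule.add_mem _ ha hb
    | smul c a _ ha =>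
      have h : m * (c • a) + (c • a) * m = c • (m * a + a * m) := by
        rw [mul_smul_comm, smul_mul_assoc, smul_add]
      rw [h]; exact Submodule.smul_mem _ _ ha
  | zero => intro w hw; simp
  | add a b _ _ hha hhb =>
    intro w hw
    have h : (a + b) * w + w * (a + b) = (a * w + w * a) + (b * w + w * b) := by
      noncomm_ring
    rw [h]; exact Submodule.add_mem _ (hha w hw) (hhb w hw)
  | smul c a _ hha =>
    intro w hw
    have h : (c • a) * w + w * (c • a) = c • (a * w + w * a) := by
      rw [mul_smul_comm, smul_mul_assoc, smul_add]
    rw [h]; exact Submodule.smul_mem _ _ (hha w hw)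

include horth in
lemma comm_om {y : CliffordAlgebra Q} (hy : y ∈ Mset Q e Set.univ) :
    Commute (om Q e) y := by
  have hgen : ∀ i : Fin 5, Commute (ι Q (e i)) (om Q e) := by
    intro i
    have hmem : i ∈ [(0 : Fin 5), 1, 2, 3, 4] := by fin_cases i <;> decide
    have h := moveMem Q e horth [0, 1, 2, 3, 4] i (by decide) hmem
    have h5 : ((-1 : K)) ^ ([(0 : Fin 5), 1, 2, 3, 4]).length = -1 := by norm_num
    rw [h5] at h
    simp only [neg_smul, one_smul, neg_neg] at h
    exact h.symm
  induction hy using Submodule.span_induction with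
  | mem m hm =>
    obtain ⟨l, hs, -, rfl⟩ := hm
    rw [P]
    refine Commute.list_prod_right _ _ fun y hy => ?_
    obtain ⟨i, -, rfl⟩ := List.mem_map.mp hy
    exact (hgen i).symm
  | zero => exact Commute.zero_right _
  | add a b _ _ ha hb => exact ha.add_right hb
  | smul c a _ ha => exact ha.smul_right c

include horth in
lemma revP_plus : ∀ y ∈ Mset Q e ({0, 1, 4, 5} : Set ℕ), reverse (Q := Q) y = y := by
  intro y hy
  induction hy using Submodule.span_induction with
  | mem m hm =>
    obtain ⟨l, hs, hlen, rfl⟩ := hm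
    rw [revP Q e horth l hs.nodup]
    have hpow : ((-1 : K)) ^ (l.length.choose 2) = 1 := by
      simp only [Set.mem_insert_iff, Set.mem_singleton_iff] at hlen
      rcases hlen with h | h | h | h <;>
        rw [h] <;> norm_num [Nat.choose]
    rw [hpow, one_smul]
  | zero => simp
  | add a b _ _ ha hb => rw [map_add, ha, hb]
  | smul c a _ ha => rw [map_smul, ha]

include horth in
lemma revP_minus : ∀ y ∈ Mset Q e ({2, 3} : Set ℕ), reverse (Q := Q) y = -y := by
  intro y hy
  induction hy using Submodule.span_induction with
  | mem m hm =>
    obtain ⟨l, hs, hlen, rfl⟩ := hm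
    rw [revP Q e horth l hs.nodup]
    have hpow : ((-1 : K)) ^ (l.length.choose 2) = -1 := by
      simp only [Set.mem_insert_iff, Set.mem_singleton_iff] at hlen
      rcases hlen with h | h <;> rw [h] <;> norm_num [Nat.choose]
    rw [hpow, neg_smul, one_smul]
  | zero => simp
  | add a b _ _ ha hb => rw [map_add, ha, hb, neg_add]
  | smul c a _ ha => rw [map_smul, ha, smul_neg]

lemma M0_le : Mset Q e ({0} : Set ℕ) ≤ Submodule.span K {(1 : CliffordAlgebra Q)} := by
  rw [Mset]
  refine Submodule.span_le.mpr ?_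
  rintro m ⟨l, hs, hlen, rfl⟩
  rw [Set.mem_singleton_iff] at hlen
  rw [List.length_eq_zero_iff.mp hlen, P_nil]
  exact Submodule.mem_span_singleton_self _

lemma M5_le : Mset Q e ({5} : Set ℕ) ≤ Submodule.span K {om Q e} := by
  rw [Mset]
  refine Submodule.span_le.mpr ?_
  rintro m ⟨l, hs, hlen, rfl⟩
  rw [Set.mem_singleton_iff] at hlen
  rw [sorted5 hs hlen]
  exact Submodule.mem_span_singleton_self _

end DetDim5

open DetDim5 in
/-- In dimension 5 (char K ≠ 2), with an orthogonal basis `e` and pseudoscalar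
`ω = ι(e 0) ⋯ ι(e 4)`, the paper's five-dimensional determinant formula
`Det(A) = A ⟦A⟧₂₃ ⟦A ⟦A⟧₂₃⟧₁₄ ⟦A ⟦A⟧₂₃ ⟦A ⟦A⟧₂₃⟧₁₄⟧₅`: with
`ξ = x * reverse x` (grades {0,1,4,5}) one has
`⟦ξ⟧₁₄ = algebraMap s + t • ω - ξ` for some `s t : K`; then
`η = ξ * ⟦ξ⟧₁₄` has grades {0,5}, `⟦η⟧₅ = algebraMap u - η` for some `u`,
and `η * ⟦η⟧₅` is a scalar `d`. -/
theorem det_dim_five (K V : Type*) [Field K] [AddCommGroup V] [Module K V]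
    [FiniteDimensional K V] (h2 : (2 : K) ≠ 0)
    (hdim : Module.finrank K V = 5)
    (Q : QuadraticForm K V) (e : Module.Basis (Fin 5) K V)
    (horth : ∀ i j : Fin 5, i ≠ j → QuadraticMap.polar Q (e i) (e j) = 0)
    (x : CliffordAlgebra Q) :
    ∃ s t u d : K,
      (x * reverse x *
            (algebraMap K (CliffordAlgebra Q) s +
              t • (ι Q (e 0) * ι Q (e 1) * ι Q (e 2) * ι Q (e 3) * ι Q (e 4)) -
              x * reverse x)) *
          (algebraMap K (CliffordAlgebra Q) u -
            x * reverse x *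
              (algebraMap K (CliffordAlgebra Q) s +
                t • (ι Q (e 0) * ι Q (e 1) * ι Q (e 2) * ι Q (e 3) * ι Q (e 4)) -
                x * reverse x)) =
        algebraMap K (CliffordAlgebra Q) d := by
  classical
  obtain ⟨c, hc⟩ := sqP Q e horth [0, 1, 2, 3, 4] (by decide)
  have hc : om Q e * om Q e = algebraMap K (CliffordAlgebra Q) c := hc
  have hω : ι Q (e 0) * ι Q (e 1) * ι Q (e 2) * ι Q (e 3) * ι Q (e 4) = om Q e := by
    simp [om, P, mul_assoc]
  set ξ := x * reverse x with hξdef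
  have hrev : reverse ξ = ξ := by rw [hξdef, reverse.map_mul, reverse_reverse]
  have htop : ξ ∈ Mset Q e Set.univ := memM Q e horth ξ
  have hle : Mset Q e Set.univ ≤ Mset Q e ({0, 1, 4, 5} : Set ℕ) ⊔ Mset Q e ({2, 3} : Set ℕ) := by
    rw [Mset]
    refine Submodule.span_le.mpr ?_
    rintro m ⟨l, hs, -, rfl⟩
    have h5 : l.length ≤ 5 := sorted_len_le hs
    by_cases hl : l.length = 2 ∨ l.length = 3
    · exact Submodule.mem_sup_right (Submodule.subset_span
        ⟨l, hs, by rcases hl with h | h <;> simp [h], rfl⟩)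
    · push_neg at hl
      exact Submodule.mem_sup_left (Submodule.subset_span
        ⟨l, hs, by simp only [Set.mem_insert_iff, Set.mem_singleton_iff]; omega, rfl⟩)
  obtain ⟨a, ha, b, hb, hab⟩ := Submodule.mem_sup.mp (hle htop)
  -- kill the odd part
  have hb0 : b = 0 := by
    have h1 : a + b = a + -b := by
      conv_lhs => rw [hab, ← hrev, ← hab]
      rw [map_add, revP_plus Q e horth a ha, revP_minus Q e horth b hb]
    have h2b : b = -b := add_left_cancel h1
    have hbb : b + b = 0 := by
      nth_rewrite 1 [h2b]
      exact neg_add_cancel b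
    have h2b' : (2 : K) • b = 0 := by rw [two_smul]; exact hbb
    rcases smul_eq_zero.mp h2b' with h | h
    · exact absurd h h2
    · exact h
  rw [hb0, add_zero] at hab
  -- split the even-reverse part into grades 0, {1,4}, 5
  have hle2 : Mset Q e ({0, 1, 4, 5} : Set ℕ) ≤
      Mset Q e ({0} : Set ℕ) ⊔ (Mset Q e ({1, 4} : Set ℕ) ⊔ Mset Q e ({5} : Set ℕ)) := by
    rw [Mset]
    refine Submodule.span_le.mpr ?_
    rintro m ⟨l, hs, hlen, rfl⟩
    simp only [Set.mem_insert_iff, Set.mem_singleton_iff] at hlen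
    rcases hlen with h | h | h | h
    · exact Submodule.mem_sup_left (Submodule.subset_span ⟨l, hs, by simp [h], rfl⟩)
    · exact Submodule.mem_sup_right (Submodule.mem_sup_left
        (Submodule.subset_span ⟨l, hs, by simp [h], rfl⟩))
    · exact Submodule.mem_sup_right (Submodule.mem_sup_left
        (Submodule.subset_span ⟨l, hs, by simp [h], rfl⟩))
    · exact Submodule.mem_sup_right (Submodule.mem_sup_right
        (Submodule.subset_span ⟨l, hs, by simp [h], rfl⟩))
  obtain ⟨x0, hx0, w, hw, hxw⟩ := Submodule.mem_sup.mp (hle2 ha)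
  obtain ⟨v, hv, x5, hx5, hvx5⟩ := Submodule.mem_sup.mp hw
  obtain ⟨s', hs'⟩ := Submodule.mem_span_singleton.mp (M0_le Q e hx0)
  obtain ⟨t', ht'⟩ := Submodule.mem_span_singleton.mp (M5_le Q e hx5)
  obtain ⟨A, hA⟩ : ∃ A : CliffordAlgebra Q, A = s' • 1 + t' • om Q e := ⟨_, rfl⟩
  have hξa : ξ = A + v := by
    rw [← hab, ← hxw, ← hvx5, ← hs', ← ht', hA]
    abel
  -- commutation
  have hMv : v ∈ Mset Q e Set.univ := by
    refine Submodule.span_mono ?_ hv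
    rintro m ⟨l, hs, -, rfl⟩
    exact ⟨l, hs, trivial, rfl⟩
  have hcomm : Commute (om Q e) v := comm_om Q e horth hMv
  have hAv : A * v = v * A := by
    rw [hA]
    simp [add_mul, mul_add, smul_mul_assoc, mul_smul_comm, hcomm.eq]
  -- the eta element
  have hvv : v * v ∈ Z Q e := by
    have h2v : v * v + v * v ∈ Z Q e :=
      bilin Q _ (Z Q e) (fun m₁ hm₁ m₂ hm₂ => pairZ Q e horth hm₁ hm₂) v hv v hv
    have h2v' : (2 : K) • (v * v) ∈ Z Q e := by rwa [two_smul]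
    have := Submodule.smul_mem (Z Q e) (2 : K)⁻¹ h2v'
    rwa [smul_smul, inv_mul_cancel₀ h2, one_smul] at this
  have hAA : A * A ∈ Z Q e := by
    have expand : A * A =
        (s' * s') • (1 : CliffordAlgebra Q) + ((s' * t') • om Q e +
          ((t' * s') • om Q e + (t' * t') • (om Q e * om Q e))) := by
      rw [hA]
      simp only [add_mul, mul_add, smul_mul_assoc, mul_smul_comm, one_mul, mul_one,
        smul_smul]
      module
    rw [expand, hc]
    refine Submodule.add_mem _ ?_ (Submodule.add_mem _ ?_ (Submodule.add_mem _ ?_ ?_))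
    · exact Submodule.smul_mem _ _ (Submodule.subset_span (Set.mem_insert _ _))
    · exact Submodule.smul_mem _ _ (om_mem_Z Q e)
    · exact Submodule.smul_mem _ _ (om_mem_Z Q e)
    · exact Submodule.smul_mem _ _ (algebraMap_mem_Z Q e c)
  have hηZ : A * A - v * v ∈ Z Q e := Submodule.sub_mem _ hAA hvv
  obtain ⟨α, β, hαβ⟩ := Submodule.mem_span_pair.mp hηZ
  -- the main rewriting
  refine ⟨2 * s', 2 * t', 2 * α, α * α - β * β * c, ?_⟩
  rw [hω]
  have hζ : algebraMap K (CliffordAlgebra Q) (2 * s') + (2 * t') • om Q e - ξ = A - v := by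
    rw [hξa, hA, Algebra.algebraMap_eq_smul_one]
    module
  rw [hζ]
  have hexp : (A + v) * (A - v) = A * A - v * v := by
    rw [mul_sub, add_mul, add_mul, hAv]
    abel
  have hprod : ξ * (A - v) = α • 1 + β • om Q e := by
    rw [hξa, hexp, hαβ]
  rw [hprod]
  have hc' : om Q e * om Q e = algebraMap K (CliffordAlgebra Q) c := hc
  rw [Algebra.algebraMap_eq_smul_one (2 * α)]
  have h1 : (2 * α) • (1 : CliffordAlgebra Q) - (α • 1 + β • om Q e) =
      α • 1 - β • om Q e := by module
  rw [h1]
  have hlhs : (α • 1 + β • om Q e) * (α • 1 - β • om Q e) =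
      (α * α) • 1 - (β * β * c) • 1 := by
    simp only [mul_sub, mul_add, add_mul, smul_mul_assoc, mul_smul_comm, one_mul,
      mul_one, smul_smul, hc', Algebra.algebraMap_eq_smul_one]
    module
  rw [hlhs, Algebra.algebraMap_eq_smul_one (α * α - β * β * c)]
  module
end

section
/- Let R be a commutative ring, M an R-module, Q a quadratic form on M, and v : Fin n → M a family of vectors that are pairwise orthogonal for Q (the polar form of Q vanishes on v i and v j whenever i ≠ j). Then the ordered product x := ι Q (v 0) * ι Q (v 1) * ⋯ * ι Q (v (n-1)) in the Clifford algebra of Q satisfies x * x = algebraMap ((-1)^(n*(n-1)/2) * ∏ i, Q (v i)). (This generalizes the paper's formula for the square of the unit pseudoscalar, I² = e₁…d e₁…d = (−1)^{d(d−1)/2} g₁₁g₂₂⋯g_dd, and establishes the claim, used in the scalar-plus-blade determinant theorem, that a blade squares to a scalar.) -/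
open CliffordAlgebra

private lemma list_prod_anticomm {A : Type*} [Ring A] (a : A) :
    ∀ l : List A, (∀ b ∈ l, a * b = -(b * a)) →
      l.prod * a = (-1 : A) ^ l.length * (a * l.prod) := by
  intro l
  induction l with
  | nil => simp
  | cons b t ih =>
    intro h
    have hb : a * b = -(b * a) := h b (by simp)
    have ht := ih (fun c hc => h c (List.mem_cons_of_mem _ hc))
    have hba : b * a = -(a * b) := by rw [hb, neg_neg]
    have hc : Commute ((-1 : A) ^ t.length) b :=
      (Commute.neg_one_left b).pow_left _
    simp only [List.prod_cons, List.length_cons, pow_succ]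
    calc b * t.prod * a = b * ((-1 : A) ^ t.length * (a * t.prod)) := by
          rw [mul_assoc, ht]
      _ = (-1 : A) ^ t.length * (b * (a * t.prod)) := by
          rw [← mul_assoc, ← hc.eq, mul_assoc]
      _ = (-1 : A) ^ t.length * -(a * (b * t.prod)) := by
          rw [show b * (a * t.prod) = -(a * (b * t.prod)) from by
            rw [← mul_assoc, hba, neg_mul, mul_assoc]]
      _ = (-1 : A) ^ t.length * (-1 : A) * (a * (b * t.prod)) := by
          rw [mul_assoc, neg_one_mul, mul_neg]

/-- The square of an ordered product of pairwise orthogonal vectors in a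
Clifford algebra: `(ι(v 0) ⋯ ι(v (n-1)))² = (-1)^(n(n-1)/2) ∏ i, Q (v i)`.
This generalizes the paper's formula `I² = (−1)^{d(d−1)/2} g₁₁ ⋯ g_dd` for the
square of the unit pseudoscalar, and shows a blade squares to a scalar. -/
theorem blade_sq (R M : Type*) [CommRing R] [AddCommGroup M] [Module R M]
    (Q : QuadraticForm R M) (n : ℕ) (v : Fin n → M)
    (horth : ∀ i j : Fin n, i ≠ j → QuadraticMap.polar Q (v i) (v j) = 0) :
    (List.ofFn fun i => ι Q (v i)).prod * (List.ofFn fun i => ι Q (v i)).prod =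
      algebraMap R (CliffordAlgebra Q) ((-1) ^ (n * (n - 1) / 2) * ∏ i, Q (v i)) := by
  induction n with
  | zero => simp
  | succ n ih =>
    set w : Fin n → M := fun i => v i.succ with hw
    have hT := ih w (fun i j hij => horth i.succ j.succ (by
      simpa [Fin.succ_inj] using hij))
    have hofn : (List.ofFn fun i : Fin (n+1) => ι Q (v i)) =
        ι Q (v 0) :: List.ofFn (fun i : Fin n => ι Q (w i)) := by
      simp [List.ofFn_succ, hw]
    set T : CliffordAlgebra Q := (List.ofFn fun i : Fin n => ι Q (w i)).prod with hTdef
    set c : CliffordAlgebra Q := algebraMap R (CliffordAlgebra Q) ((-1 : R) ^ n) with hcdef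
    have hanti : ∀ b ∈ (List.ofFn fun i : Fin n => ι Q (w i)),
        ι Q (v 0) * b = -(b * ι Q (v 0)) := by
      intro b hb
      rw [List.mem_ofFn] at hb
      obtain ⟨i, rfl⟩ := hb
      have h2 := CliffordAlgebra.ι_mul_ι_add_swap (Q := Q) (v 0) (w i)
      rw [horth 0 i.succ (by simp [Fin.ext_iff]), map_zero] at h2
      exact eq_neg_of_add_eq_zero_left h2
    have hmove : T * ι Q (v 0) = c * (ι Q (v 0) * T) := by
      have h3 := list_prod_anticomm (ι Q (v 0)) _ hanti
      have hc1 : ((-1 : CliffordAlgebra Q) ^ n) = c := by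
        rw [hcdef, map_pow, map_neg, map_one]
      simp only [List.length_ofFn, ← hTdef] at h3
      rw [h3, hc1]
    have hcomm : ∀ x : CliffordAlgebra Q, ι Q (v 0) * (c * x) = c * (ι Q (v 0) * x) :=
      fun x => by rw [← mul_assoc, ← Algebra.commutes, mul_assoc]
    rw [hofn, List.prod_cons]
    calc ι Q (v 0) * T * (ι Q (v 0) * T)
        = ι Q (v 0) * (T * ι Q (v 0)) * T := by simp only [mul_assoc]
      _ = c * (ι Q (v 0) * ι Q (v 0) * (T * T)) := by
          rw [hmove, ← mul_assoc (ι Q (v 0)) c, ← Algebra.commutes]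
          simp only [mul_assoc]
          rfl
      _ = algebraMap R (CliffordAlgebra Q)
            ((-1 : R) ^ n * (Q (v 0) * ((-1) ^ (n * (n - 1) / 2) * ∏ i, Q (w i)))) := by
          rw [CliffordAlgebra.ι_sq_scalar, hT, hcdef, ← map_mul, ← map_mul]
      _ = algebraMap R (CliffordAlgebra Q)
            ((-1) ^ ((n+1) * ((n+1) - 1) / 2) * ∏ i : Fin (n+1), Q (v i)) := by
          congr 1
          rw [Fin.prod_univ_succ]
          have he : (n+1) * ((n+1) - 1) / 2 = n + n * (n - 1) / 2 := by
            rcases n with _ | m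
            · simp
            · have h1 : (m+1+1)*(m+1) = (m+1)*m + 2*(m+1) := by ring
              obtain ⟨k, hk⟩ := Nat.even_mul_succ_self m
              have h2 : (m+1)*m = 2*k := by rw [mul_comm]; omega
              simp only [Nat.succ_sub_one]
              omega
          rw [he, pow_add]
          ring
end
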